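/- Fix τ ∈ (0,1), integers N, T ≥ 1, responses y_{it} ∈ ℝ and covariates x_{it} ∈ ℝ^p for 1 ≤ i ≤ N, 1 ≤ t ≤ T, and a penalty level λ > 0. Suppose (β̂, α̂) ∈ ℝ^p × ℝ^N minimizes the penalized panel quantile regression objective (β, α) ↦ Σ_{i=1}^N Σ_{t=1}^T ρ_τ(y_{it} − x_{it}'β − α_i) + λ Σ_{i=1}^N |α_i|. If λ > max{τ, 1−τ} · T, then α̂_i = 0 for every i = 1, …, N. -/
import Mathlib

/-- The quantile regression check function `ρ_τ(u) = u(τ - 1{u < 0})`. -/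
noncomputable def checkFn (τ u : ℝ) : ℝ := u * (τ - if u < 0 then 1 else 0)

open scoped RealInnerProductSpace

lemma checkFn_eq_max {τ : ℝ} (hτ : τ ∈ Set.Ioo (0:ℝ) 1) (u : ℝ) :
    checkFn τ u = max (τ * u) ((τ - 1) * u) := by
  unfold checkFn
  rcases lt_or_ge u 0 with h | h
  · rw [if_pos h, max_eq_right (by nlinarith [hτ.2])]; ring
  · rw [if_neg (not_lt.2 h), max_eq_left (by nlinarith)]; ring

lemma checkFn_sub_le {τ : ℝ} (hτ : τ ∈ Set.Ioo (0:ℝ) 1) (u v : ℝ) :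
    checkFn τ u - checkFn τ v ≤ max τ (1 - τ) * |u - v| := by
  rw [checkFn_eq_max hτ u, checkFn_eq_max hτ v]
  rcases abs_cases (u - v) with ⟨h1, h2⟩ | ⟨h1, h2⟩ <;>
  · rcases max_cases (τ * u) ((τ - 1) * u) with ⟨h3, _⟩ | ⟨h3, _⟩ <;>
    rcases max_cases τ (1 - τ) with ⟨h4, _⟩ | ⟨h4, _⟩ <;>
    nlinarith [le_max_left (τ * v) ((τ - 1) * v), le_max_right (τ * v) ((τ - 1) * v),
      hτ.1, hτ.2]

/-- If `(β̂, α̂)` minimizes the penalized panel quantile regression objective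
`(β, α) ↦ Σᵢ Σₜ ρ_τ(y_{it} − x_{it}'β − αᵢ) + λ Σᵢ |αᵢ|` and
`λ > max {τ, 1−τ} · T`, then all the estimated individual effects are zero. -/
theorem penalized_panel_qr_all_effects_zero
    (τ : ℝ) (hτ : τ ∈ Set.Ioo (0 : ℝ) 1)
    (p N T : ℕ) (hN : 1 ≤ N) (hT : 1 ≤ T)
    (y : Fin N → Fin T → ℝ) (x : Fin N → Fin T → EuclideanSpace ℝ (Fin p))
    (lam : ℝ) (hlam : 0 < lam)
    (βhat : EuclideanSpace ℝ (Fin p)) (αhat : Fin N → ℝ)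
    (hmin : ∀ (β : EuclideanSpace ℝ (Fin p)) (α : Fin N → ℝ),
      (∑ i, ∑ t, checkFn τ (y i t - ⟪x i t, βhat⟫ - αhat i)) + lam * ∑ i, |αhat i|
        ≤ (∑ i, ∑ t, checkFn τ (y i t - ⟪x i t, β⟫ - α i)) + lam * ∑ i, |α i|)
    (hbound : max τ (1 - τ) * (T : ℝ) < lam) :
    ∀ i, αhat i = 0 := by
  intro i
  by_contra hne
  have habs : 0 < |αhat i| := abs_pos.2 hne
  set α' : Fin N → ℝ := Function.update αhat i 0 with hα'
  have hmin' := hmin βhat α'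
  have hsum_abs : ∑ j, |α' j| = (∑ j, |αhat j|) - |αhat i| := by
    have h1 : ∀ j, |α' j| = Function.update (fun j => |αhat j|) i 0 j := by
      intro j
      by_cases h : j = i <;> simp [hα', Function.update, h]
    rw [Finset.sum_congr rfl (fun j _ => h1 j),
      Finset.sum_update_of_mem (Finset.mem_univ i), zero_add, Finset.sdiff_singleton_eq_erase,
      ← Finset.add_sum_erase _ _ (Finset.mem_univ i)]
    ring
  have hdiff : (∑ j, ∑ t, checkFn τ (y j t - ⟪x j t, βhat⟫ - α' j))
      - (∑ j, ∑ t, checkFn τ (y j t - ⟪x j t, βhat⟫ - αhat j))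
      = ∑ t, (checkFn τ (y i t - ⟪x i t, βhat⟫ - 0)
          - checkFn τ (y i t - ⟪x i t, βhat⟫ - αhat i)) := by
    rw [← Finset.sum_sub_distrib]
    rw [Finset.sum_eq_single_of_mem i (Finset.mem_univ i)]
    · rw [← Finset.sum_sub_distrib]
      simp [hα']
    · intro j _ hj
      simp [hα', Function.update_of_ne hj]
  have hbd : ∑ t, (checkFn τ (y i t - ⟪x i t, βhat⟫ - 0)
      - checkFn τ (y i t - ⟪x i t, βhat⟫ - αhat i))
      ≤ (T : ℝ) * (max τ (1 - τ) * |αhat i|) := by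
    calc _ ≤ ∑ _t : Fin T, max τ (1 - τ) * |αhat i| := by
          apply Finset.sum_le_sum
          intro t _
          have := checkFn_sub_le hτ (y i t - ⟪x i t, βhat⟫ - 0)
            (y i t - ⟪x i t, βhat⟫ - αhat i)
          have heq : (y i t - ⟪x i t, βhat⟫ - 0) - (y i t - ⟪x i t, βhat⟫ - αhat i)
              = αhat i := by ring
          rwa [heq] at this
      _ = (T : ℝ) * (max τ (1 - τ) * |αhat i|) := by
          rw [Finset.sum_const, Finset.card_univ, Fintype.card_fin, nsmul_eq_mul]
  have hmax : 0 < max τ (1 - τ) := lt_max_iff.2 (Or.inl hτ.1)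
  nlinarith [hmin', hsum_abs, hdiff, hbd, habs]
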